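/- Let P be a compact convex set in ℝ^d with 0 in its interior, and let Λ be an additive subgroup of ℝ^d such that the translates P + t, for t ∈ Λ, have pairwise disjoint interiors. Let F be a nonempty subset of ℝ^d whose direction space (the linear span of all differences x − y with x, y ∈ F) has dimension d − k. Then the set {t ∈ Λ : F ⊆ P + t} is finite and has at most 2^k elements. -/

import Mathlib

open Pointwise

open MeasureTheory ENNReal in

set_option maxHeartbeats 1000000 in
private lemma dg_bound (n : ℕ) : ∀ (S : Set (EuclideanSpace ℝ (Fin n))), S.Finite →
    (∀ s ∈ S, ∀ t ∈ S, s ≠ t → ∀ η : ℝ, 0 < η →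
      (1+η) • (s - t) ∉ convexHull ℝ (S - S)) →
    S.ncard ≤ 2 ^ n := by
  induction n using Nat.strong_induction_on with
  | _ n ih =>
  intro S hSfin hsep
  rcases S.eq_empty_or_nonempty with rfl | ⟨s₀, hs₀⟩
  · simp
  by_cases hspan : Submodule.span ℝ (S - S) = ⊤
  · -- full dimensional case: volume argument
    set M := convexHull ℝ S with hMdef
    have hSM : S ⊆ M := subset_convexHull ℝ S
    have hMconv : Convex ℝ M := convex_convexHull ℝ S
    have hMcpt : IsCompact M := hSfin.isCompact_convexHull ℝ
    have hvs : vectorSpan ℝ S = ⊤ := by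
      rw [vectorSpan_def]
      exact hspan
    have haff : affineSpan ℝ S = ⊤ :=
      (AffineSubspace.affineSpan_eq_top_iff_vectorSpan_eq_top_of_nonempty ℝ _ _ ⟨s₀, hs₀⟩).2 hvs
    have hint : (interior M).Nonempty := by
      rw [hMconv.interior_nonempty_iff_affineSpan_eq_top, affineSpan_convexHull]
      exact haff
    set μ : Measure (EuclideanSpace ℝ (Fin n)) := volume with hμdef
    have hμM0 : μ M ≠ 0 := by
      have : 0 < μ (interior M) := isOpen_interior.measure_pos μ hint
      exact fun h => absurd (le_antisymm (h ▸ measure_mono interior_subset) (zero_le))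
        this.ne'
    have hμMtop : μ M ≠ ⊤ := hMcpt.measure_lt_top.ne
    have hμintM : μ (interior M) = μ M := by
      refine le_antisymm (measure_mono interior_subset) ?_
      calc μ M ≤ μ (interior M ∪ frontier M) := by
            refine measure_mono ?_
            rw [← closure_eq_interior_union_frontier]
            exact subset_closure
        _ ≤ μ (interior M) + μ (frontier M) := measure_union_le _ _
        _ = μ (interior M) := by rw [hMconv.addHaar_frontier μ, add_zero]
    -- the half-bodies
    set B : EuclideanSpace ℝ (Fin n) → Set (EuclideanSpace ℝ (Fin n)) :=
      fun s => (2⁻¹ : ℝ) • s +ᵥ (2⁻¹ : ℝ) • M with hBdef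
    have hBsub : ∀ s ∈ S, B s ⊆ M := by
      rintro s hs x hx
      rw [hBdef] at hx
      simp only [Set.mem_vadd_set, Set.mem_smul_set] at hx
      obtain ⟨y, ⟨m, hm, rfl⟩, rfl⟩ := hx
      rw [vadd_eq_add]
      exact hMconv (hSM hs) hm (by norm_num) (by norm_num) (by norm_num)
    have hBint : ∀ s : EuclideanSpace ℝ (Fin n),
        interior (B s) = (2⁻¹ : ℝ) • s +ᵥ (2⁻¹ : ℝ) • interior M := by
      intro s
      rw [hBdef]
      simp only [interior_vadd, interior_smul₀ (by norm_num : (2⁻¹:ℝ) ≠ 0)]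
    have hBdisj : (hSfin.toFinset : Set (EuclideanSpace ℝ (Fin n))).Pairwise
        (Function.onFun Disjoint (fun s => interior (B s))) := by
      intro s hs t ht hst
      simp only [Set.Finite.coe_toFinset] at hs ht
      rw [Function.onFun, Set.disjoint_left]
      intro x hxs hxt
      rw [hBint] at hxs hxt
      simp only [Set.mem_vadd_set, Set.mem_smul_set] at hxs hxt
      obtain ⟨y₁, ⟨m₁, hm₁, rfl⟩, hmx₁⟩ := hxs
      obtain ⟨y₂, ⟨m₂, hm₂, rfl⟩, hmx₂⟩ := hxt
      have hid : s - t = m₂ - m₁ := by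
        have h12 : (2⁻¹:ℝ) • s + (2⁻¹:ℝ) • m₁ = (2⁻¹:ℝ) • t + (2⁻¹:ℝ) • m₂ := by
          rw [← vadd_eq_add, ← vadd_eq_add, hmx₁, hmx₂]
        have h3 : (2:ℝ) • ((2⁻¹:ℝ) • s + (2⁻¹:ℝ) • m₁) =
            (2:ℝ) • ((2⁻¹:ℝ) • t + (2⁻¹:ℝ) • m₂) := by rw [h12]
        simp only [smul_add, smul_smul] at h3
        norm_num at h3
        linear_combination (norm := module) h3
      have hMM : interior M - interior M ⊆ interior (M - M) := by
        have hopen : IsOpen (interior M - interior M) := isOpen_interior.sub_right (t := interior M)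
        exact interior_maximal (Set.sub_subset_sub interior_subset interior_subset) hopen
      have hmem : s - t ∈ interior (M - M) := hMM ⟨m₂, hm₂, m₁, hm₁, hid.symm⟩
      have hMMconv : M - M = convexHull ℝ (S - S) := (convexHull_sub S S).symm
      rw [hMMconv] at hmem
      have hcont : Continuous fun c : ℝ => c • (s - t) := continuous_id.smul continuous_const
      have hev : ∀ᶠ c in nhds (1:ℝ), c • (s - t) ∈ interior (convexHull ℝ (S - S)) := by
        have h1 : (fun c : ℝ => c • (s - t)) 1 ∈ interior (convexHull ℝ (S - S)) := by
          simpa using hmem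
        exact hcont.continuousAt.eventually_mem (isOpen_interior.mem_nhds h1)
      obtain ⟨ε, hε, hball⟩ := Metric.eventually_nhds_iff_ball.1 hev
      have hη : (0:ℝ) < ε/2 := by linarith
      have h1mem : (1 + ε/2) • (s - t) ∈ interior (convexHull ℝ (S - S)) := by
        apply hball
        simp only [Metric.mem_ball, Real.dist_eq]
        rw [show (1 + ε/2 - 1 : ℝ) = ε/2 by ring, abs_of_pos hη]
        linarith
      exact hsep s hs t ht hst (ε/2) hη (interior_subset h1mem)
    -- measure computation
    have hmeasB : ∀ s : EuclideanSpace ℝ (Fin n),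
        μ (interior (B s)) = ((2:ℝ≥0∞)^n)⁻¹ * μ M := by
      intro s
      rw [hBint, measure_vadd, Measure.addHaar_smul, hμintM]
      congr 1
      rw [finrank_euclideanSpace_fin]
      rw [abs_of_pos (by positivity), ENNReal.ofReal_pow (by norm_num)]
      rw [ENNReal.ofReal_inv_of_pos (by norm_num), ENNReal.inv_pow]
      norm_num
    have hsum : (hSfin.toFinset.card : ℝ≥0∞) * (((2:ℝ≥0∞)^n)⁻¹ * μ M) ≤ μ M := by
      have hunion : (⋃ s ∈ hSfin.toFinset, interior (B s)) ⊆ M := by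
        intro x hx
        simp only [Set.mem_iUnion] at hx
        obtain ⟨s, hs, hxs⟩ := hx
        exact hBsub s (by simpa using hs) (interior_subset hxs)
      calc (hSfin.toFinset.card : ℝ≥0∞) * (((2:ℝ≥0∞)^n)⁻¹ * μ M)
          = ∑ s ∈ hSfin.toFinset, μ (interior (B s)) := by
            rw [Finset.sum_congr rfl (fun s _ => hmeasB s), Finset.sum_const, nsmul_eq_mul]
        _ = μ (⋃ s ∈ hSfin.toFinset, interior (B s)) :=
            (measure_biUnion_finset hBdisj (fun s _ => isOpen_interior.measurableSet)).symm
        _ ≤ μ M := measure_mono hunion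
    have hcard : (hSfin.toFinset.card : ℝ≥0∞) * ((2:ℝ≥0∞)^n)⁻¹ ≤ 1 := by
      rw [← mul_assoc] at hsum
      have hsum' : ((hSfin.toFinset.card : ℝ≥0∞) * ((2:ℝ≥0∞)^n)⁻¹) * μ M ≤ 1 * μ M := by
        rw [one_mul]; exact hsum
      exact (ENNReal.mul_le_mul_iff_left hμM0 hμMtop).1 hsum'
    have hfin : (hSfin.toFinset.card : ℝ≥0∞) ≤ 2^n := by
      have h2n0 : ((2:ℝ≥0∞)^n) ≠ 0 := by positivity
      have h2nt : ((2:ℝ≥0∞)^n) ≠ ⊤ := by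
        exact ENNReal.pow_ne_top (by norm_num)
      calc (hSfin.toFinset.card : ℝ≥0∞)
          = (hSfin.toFinset.card : ℝ≥0∞) * ((2:ℝ≥0∞)^n)⁻¹ * (2:ℝ≥0∞)^n := by
            rw [mul_assoc, ENNReal.inv_mul_cancel h2n0 h2nt, mul_one]
        _ ≤ 1 * (2:ℝ≥0∞)^n := mul_le_mul_left hcard _
        _ = 2^n := one_mul _
    have : (hSfin.toFinset.card : ℝ≥0∞) ≤ ((2^n : ℕ) : ℝ≥0∞) := by
      push_cast
      exact hfin
    rw [Nat.cast_le] at this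
    rwa [Set.ncard_eq_toFinset_card S hSfin]
  · -- dimension-reduction case
    set U : Submodule ℝ (EuclideanSpace ℝ (Fin n)) := Submodule.span ℝ (S - S) with hUdef
    have hmn : Module.finrank ℝ U < n := by
      have h := Submodule.finrank_lt (s := U) hspan
      simpa [finrank_euclideanSpace_fin] using h
    set g := (stdOrthonormalBasis ℝ U).repr with hgdef
    set ψ : EuclideanSpace ℝ (Fin n) →ₗ[ℝ] EuclideanSpace ℝ (Fin (Module.finrank ℝ U)) :=
      (g.toLinearEquiv.toLinearMap).comp (U.orthogonalProjectionOnto).toLinearMap with hψdef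
    have hSSU : (S - S : Set _) ⊆ (U : Set _) := Submodule.subset_span
    have hinjU : ∀ u ∈ U, ∀ v ∈ U, ψ u = ψ v → u = v := by
      intro u hu v hv h
      have h1 : g ((U.orthogonalProjectionOnto) u) = g ((U.orthogonalProjectionOnto) v) := h
      have h2 := congrArg (Subtype.val) (g.injective h1)
      rwa [← Submodule.starProjection_apply, ← Submodule.starProjection_apply, Submodule.starProjection_eq_self_iff.2 hu, Submodule.starProjection_eq_self_iff.2 hv] at h2
    set φ : EuclideanSpace ℝ (Fin n) → EuclideanSpace ℝ (Fin (Module.finrank ℝ U)) :=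
      fun x => ψ (x - s₀) with hφdef
    have hdiff : ∀ a ∈ S, ∀ b ∈ S, φ a - φ b = ψ (a - b) := by
      intro a _ b _
      rw [hφdef]
      simp only [← map_sub]
      congr 1
      abel
    have himg : φ '' S - φ '' S = ψ '' (S - S) := by
      ext x
      constructor
      · rintro ⟨x₁, ⟨a, ha, rfl⟩, x₂, ⟨b, hb, rfl⟩, rfl⟩
        exact ⟨a - b, Set.sub_mem_sub ha hb, (hdiff a ha b hb).symm⟩
      · rintro ⟨y, ⟨a, ha, b, hb, rfl⟩, rfl⟩
        exact ⟨φ a, ⟨a, ha, rfl⟩, φ b, ⟨b, hb, rfl⟩, (hdiff a ha b hb)⟩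
    have hconvU : convexHull ℝ (S - S) ⊆ (U : Set _) :=
      convexHull_min hSSU U.convex
    have hsep' : ∀ s' ∈ φ '' S, ∀ t' ∈ φ '' S, s' ≠ t' → ∀ η : ℝ, 0 < η →
        (1+η) • (s' - t') ∉ convexHull ℝ (φ '' S - φ '' S) := by
      rintro s' ⟨a, ha, rfl⟩ t' ⟨b, hb, rfl⟩ hne η hη hmem
      have hab : a ≠ b := by rintro rfl; exact hne rfl
      rw [himg, ← ψ.image_convexHull] at hmem
      rw [hdiff a ha b hb, ← _root_.map_smul] at hmem
      obtain ⟨c, hc, hcψ⟩ := hmem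
      have hcU : c ∈ U := hconvU hc
      have habU : (1+η) • (a - b) ∈ U := U.smul_mem _ (hSSU (Set.sub_mem_sub ha hb))
      have := hinjU c hcU _ habU hcψ
      rw [this] at hc
      exact hsep a ha b hb hab η hη hc
    have hinjS : Set.InjOn φ S := by
      intro a ha b hb h
      have h2 : a - s₀ = b - s₀ := by
        refine hinjU _ (hSSU (Set.sub_mem_sub ha hs₀)) _ (hSSU (Set.sub_mem_sub hb hs₀)) h
      exact sub_left_injective h2
    calc S.ncard = (φ '' S).ncard := (Set.ncard_image_of_injOn hinjS).symm
      _ ≤ 2 ^ (Module.finrank ℝ U) := ih _ hmn _ (hSfin.image φ) hsep'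
      _ ≤ 2 ^ n := Nat.pow_le_pow_right (by norm_num) hmn.le


private lemma small_multiples {X : Type*} [AddCommGroup X] [Module ℝ X]
    {C : Set X} (hC : Convex ℝ C) (hsym : ∀ x ∈ C, -x ∈ C) (h0 : (0:X) ∈ C)
    {z : X} (hz : z ∈ Submodule.span ℝ C) :
    ∃ τ : ℝ, 0 < τ ∧ ∀ τ' : ℝ, |τ'| ≤ τ → τ' • z ∈ C := by
  have base : ∀ x ∈ C, ∀ τ' : ℝ, |τ'| ≤ 1 → τ' • x ∈ C := by
    intro x hx τ' hτ'
    rcases le_or_gt 0 τ' with h | h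
    · exact hC.smul_mem_of_zero_mem h0 hx ⟨h, (abs_of_nonneg h ▸ hτ')⟩
    · have : τ' • x = (-τ') • (-x) := by simp
      rw [this]
      exact hC.smul_mem_of_zero_mem h0 (hsym x hx)
        ⟨by linarith, by rw [abs_of_neg h] at hτ'; linarith⟩
  induction hz using Submodule.span_induction with
  | mem x hx => exact ⟨1, one_pos, base x hx⟩
  | zero => exact ⟨1, one_pos, fun τ' _ => by simpa using h0⟩
  | add x y hx hy ihx ihy =>
      obtain ⟨τ₁, hτ₁, h₁⟩ := ihx
      obtain ⟨τ₂, hτ₂, h₂⟩ := ihy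
      refine ⟨min τ₁ τ₂ / 2, by positivity, fun τ' hτ' => ?_⟩
      have e : τ' • (x + y) = (1/2 : ℝ) • ((2*τ') • x) + (1/2 : ℝ) • ((2*τ') • y) := by
        rw [smul_add]; rw [smul_smul, smul_smul]; ring_nf
      rw [e]
      have h2τ : |2*τ'| ≤ min τ₁ τ₂ := by
        rw [abs_mul, abs_two]
        have := hτ'
        nlinarith [abs_nonneg τ', le_min hτ₁.le hτ₂.le]
      exact hC (h₁ _ (h2τ.trans (min_le_left _ _))) (h₂ _ (h2τ.trans (min_le_right _ _)))
        (by norm_num) (by norm_num) (by norm_num)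
  | smul a x hx ih =>
      obtain ⟨τ₁, hτ₁, h₁⟩ := ih
      refine ⟨τ₁ / (|a| + 1), by positivity, fun τ' hτ' => ?_⟩
      rw [smul_smul]
      refine h₁ _ ?_
      have ha : (0:ℝ) < |a| + 1 := by positivity
      rw [abs_mul]
      calc |τ'| * |a| ≤ (τ₁ / (|a|+1)) * |a| := by
              apply mul_le_mul_of_nonneg_right hτ' (abs_nonneg a)
        _ ≤ τ₁ := by
              rw [div_mul_eq_mul_div, div_le_iff₀ ha]
              nlinarith [abs_nonneg a, hτ₁.le]


private lemma packing_lemma {d : ℕ} {P : Set (EuclideanSpace ℝ (Fin d))}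
    (hPconvex : Convex ℝ P) (hP0 : (0 : EuclideanSpace ℝ (Fin d)) ∈ interior P)
    {Λ : AddSubgroup (EuclideanSpace ℝ (Fin d))}
    (hpack : ∀ s ∈ Λ, ∀ t ∈ Λ, s ≠ t → Disjoint (interior (s +ᵥ P)) (interior (t +ᵥ P)))
    {w : EuclideanSpace ℝ (Fin d)} (hw : w ∈ Λ) (hw0 : w ≠ 0) :
    w ∉ interior (P - P) := by
  intro hint
  have hcont : Continuous fun c : ℝ => c • w := continuous_id.smul continuous_const
  have hev : ∀ᶠ c in nhds (1:ℝ), c • w ∈ interior (P - P) :=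
    hcont.continuousAt.eventually_mem (isOpen_interior.mem_nhds (by simpa using hint))
  obtain ⟨ε, hε, hball⟩ := Metric.eventually_nhds_iff_ball.1 hev
  set η := ε/2 with hηdef
  have hηpos : (0:ℝ) < η := by positivity
  have hmem : (1+η) • w ∈ P - P := by
    refine interior_subset (hball _ ?_)
    simp only [Metric.mem_ball, Real.dist_eq]
    rw [show (1 + η - 1 : ℝ) = η by ring, abs_of_pos hηpos]
    rw [hηdef]; linarith
  obtain ⟨p, hp, q, hq, hpq⟩ := hmem
  set b : ℝ := (1+η)⁻¹ with hbdef
  have h1η : (0:ℝ) < 1 + η := by linarith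
  have hbpos : 0 < b := by positivity
  have hab : η/(1+η) + b = 1 := by rw [hbdef]; field_simp; ring
  have hapos : 0 < η/(1+η) := by positivity
  have hzP : b • p ∈ interior P := by
    have h := hPconvex.combo_interior_self_mem_interior hP0 hp hapos hbpos.le hab
    simpa using h
  have hzQ : b • p - w ∈ interior P := by
    have hpw : p = (1+η) • w + q := by
      have hpq' : p - q = (1+η) • w := hpq
      exact (eq_add_of_sub_eq hpq')
    have h : b • p - w = b • q := by
      rw [hpw, smul_add, smul_smul, hbdef, inv_mul_cancel₀ h1η.ne', one_smul]
      abel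
    rw [h]
    have h2 := hPconvex.combo_interior_self_mem_interior hP0 hq hapos hbpos.le hab
    simpa using h2
  have hdisj := hpack w hw 0 Λ.zero_mem hw0
  rw [Set.disjoint_left] at hdisj
  refine hdisj (a := b • p) ?_ ?_
  · rw [interior_vadd, Set.mem_vadd_set_iff_neg_vadd_mem]
    simpa [vadd_eq_add, sub_eq_neg_add] using hzQ
  · simpa [interior_vadd] using hzP


set_option maxHeartbeats 1000000 in
/-- Main theorem: the valence of a face with direction space of dimension `d - k`
in a packing of `ℝ^d` by `Λ`-translates of a compact convex body `P` (with `0` in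
its interior) is at most `2 ^ k`. -/
theorem valence_le_two_pow (d k : ℕ) (hk : k ≤ d)
    (P : Set (EuclideanSpace ℝ (Fin d))) (hPcompact : IsCompact P) (hPconvex : Convex ℝ P)
    (hP0 : (0 : EuclideanSpace ℝ (Fin d)) ∈ interior P)
    (Λ : AddSubgroup (EuclideanSpace ℝ (Fin d)))
    (hpack : ∀ s ∈ Λ, ∀ t ∈ Λ, s ≠ t →
      Disjoint (interior (s +ᵥ P)) (interior (t +ᵥ P)))
    (F : Set (EuclideanSpace ℝ (Fin d))) (hF : F.Nonempty)
    (hdim : Module.finrank ℝ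
      (Submodule.span ℝ {x : EuclideanSpace ℝ (Fin d) | ∃ a ∈ F, ∃ b ∈ F, x = a - b})
      = d - k) :
    {t : EuclideanSpace ℝ (Fin d) | t ∈ Λ ∧ F ⊆ t +ᵥ P}.Finite ∧
      {t : EuclideanSpace ℝ (Fin d) | t ∈ Λ ∧ F ⊆ t +ᵥ P}.ncard ≤ 2 ^ k := by
  classical
  obtain ⟨x₀, hx₀⟩ := hF
  set T := {t : EuclideanSpace ℝ (Fin d) | t ∈ Λ ∧ F ⊆ t +ᵥ P} with hTdef
  set D := P - P with hDdef
  have hDconv : Convex ℝ D := hPconvex.sub hPconvex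
  have h0D : (0 : EuclideanSpace ℝ (Fin d)) ∈ interior D := by
    have hPD : interior P ⊆ D := fun x hx =>
      ⟨x, interior_subset hx, 0, interior_subset hP0, sub_zero x⟩
    exact interior_maximal hPD isOpen_interior hP0
  -- direction space
  have hFF : {x : EuclideanSpace ℝ (Fin d) | ∃ a ∈ F, ∃ b ∈ F, x = a - b} = F - F := by
    ext x
    simp only [Set.mem_setOf_eq, Set.mem_sub]
    constructor
    · rintro ⟨a, ha, b, hb, rfl⟩; exact ⟨a, ha, b, hb, rfl⟩
    · rintro ⟨a, ha, b, hb, rfl⟩; exact ⟨a, ha, b, hb, rfl⟩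
  set V : Submodule ℝ (EuclideanSpace ℝ (Fin d)) := Submodule.span ℝ (F - F) with hVdef
  have hdimV : Module.finrank ℝ V = d - k := by
    rw [hVdef, ← hFF]; exact hdim
  set E₀ := convexHull ℝ (F - F) with hE₀def
  have hE₀conv : Convex ℝ E₀ := convex_convexHull ℝ _
  have hnegFF : ∀ y, y ∈ F - F → -y ∈ F - F := by
    rintro y ⟨a, ha, b, hb, rfl⟩
    exact ⟨b, hb, a, ha, by show b - a = -(a - b); abel⟩
  have hE₀sym : ∀ x ∈ E₀, -x ∈ E₀ := by
    intro x hx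
    have h1 : -x ∈ convexHull ℝ (-(F - F)) := by
      rw [convexHull_neg]
      exact Set.neg_mem_neg.2 hx
    refine convexHull_mono ?_ h1
    intro y hy
    have h2 : -y ∈ F - F := Set.mem_neg.1 hy
    simpa using hnegFF _ h2
  have h0E₀ : (0 : EuclideanSpace ℝ (Fin d)) ∈ E₀ :=
    subset_convexHull ℝ _ ⟨x₀, hx₀, x₀, hx₀, sub_self x₀⟩
  have hVE₀ : V ≤ Submodule.span ℝ E₀ := by
    rw [hVdef]
    exact Submodule.span_mono (subset_convexHull ℝ _)
  -- orthogonal complement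
  set W : Submodule ℝ (EuclideanSpace ℝ (Fin d)) := Vᗮ with hWdef
  have hWrank : Module.finrank ℝ W = k := by
    have h := Submodule.finrank_add_finrank_orthogonal (K := V)
    rw [finrank_euclideanSpace_fin, hdimV, ← hWdef] at h
    omega
  set g := (stdOrthonormalBasis ℝ W).repr with hgdef
  set ρ : EuclideanSpace ℝ (Fin d) →ₗ[ℝ] EuclideanSpace ℝ (Fin (Module.finrank ℝ W)) :=
    (g.toLinearEquiv.toLinearMap).comp (W.orthogonalProjectionOnto).toLinearMap with hρdef
  have hkerρ : ∀ x : EuclideanSpace ℝ (Fin d), ρ x = 0 → x ∈ V := by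
    intro x hx
    have h1 : g ((W.orthogonalProjectionOnto) x) = 0 := hx
    have h2 : (W.orthogonalProjectionOnto) x = 0 := by
      have := congrArg g.symm h1
      simpa using this
    have h3 : x ∈ Wᗮ := Submodule.orthogonalProjectionOnto_eq_zero_iff.1 h2
    rwa [hWdef, Submodule.orthogonal_orthogonal] at h3
  -- the key finite bound
  have key : ∀ G : Finset (EuclideanSpace ℝ (Fin d)), ↑G ⊆ T → G.card ≤ 2 ^ k := by
    intro G hG
    -- basic difference property
    have hbase : ∀ w ∈ (↑G - ↑G : Set (EuclideanSpace ℝ (Fin d))), ∀ f ∈ F - F,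
        w + f ∈ D := by
      rintro w ⟨s, hs, t, ht, rfl⟩ f ⟨a, ha, b, hb, rfl⟩
      have hsT := hG hs
      have htT := hG ht
      -- a ∈ t + P, b ∈ s + P
      have h1 : a - t ∈ P := by
        have := htT.2 ha
        rwa [Set.mem_vadd_set_iff_neg_vadd_mem, vadd_eq_add, neg_add_eq_sub] at this
      have h2 : b - s ∈ P := by
        have := hsT.2 hb
        rwa [Set.mem_vadd_set_iff_neg_vadd_mem, vadd_eq_add, neg_add_eq_sub] at this
      exact ⟨a - t, h1, b - s, h2, by dsimp only; abel⟩
    have hstep : ∀ w ∈ (↑G - ↑G : Set (EuclideanSpace ℝ (Fin d))), ∀ e ∈ E₀,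
        w + e ∈ D := by
      intro w hw e he
      have hconv : Convex ℝ {e : EuclideanSpace ℝ (Fin d) | w + e ∈ D} := by
        intro e₁ he₁ e₂ he₂ a b ha hb hab
        simp only [Set.mem_setOf_eq] at he₁ he₂ ⊢
        have h : w + (a • e₁ + b • e₂) = a • (w + e₁) + b • (w + e₂) := by
          rw [smul_add, smul_add]
          rw [show a • w + a • e₁ + (b • w + b • e₂)
              = (a + b) • w + (a • e₁ + b • e₂) by rw [add_smul]; abel]
          rw [hab, one_smul]
        rw [h]
        exact hDconv he₁ he₂ ha hb hab
      exact convexHull_min (fun f hf => hbase w hw f hf) hconv he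
    have hGhull : ∀ c ∈ convexHull ℝ (↑G - ↑G : Set (EuclideanSpace ℝ (Fin d))),
        ∀ e ∈ E₀, c + e ∈ D := by
      intro c hc e he
      have hconv : Convex ℝ {c : EuclideanSpace ℝ (Fin d) | c + e ∈ D} := by
        intro c₁ hc₁ c₂ hc₂ a b ha hb hab
        simp only [Set.mem_setOf_eq] at hc₁ hc₂ ⊢
        have h : (a • c₁ + b • c₂) + e = a • (c₁ + e) + b • (c₂ + e) := by
          rw [smul_add, smul_add]
          rw [show a • c₁ + a • e + (b • c₂ + b • e)
              = (a • c₁ + b • c₂) + (a + b) • e by rw [add_smul]; abel]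
          rw [hab, one_smul]
        rw [h]
        exact hDconv hc₁ hc₂ ha hb hab
      exact convexHull_min (fun w hw => hstep w hw e he) hconv hc
    have claim : ∀ s ∈ G, ∀ t ∈ G, s ≠ t → ∀ η : ℝ, 0 < η →
        (1+η) • (ρ s - ρ t) ∉ convexHull ℝ ((ρ '' ↑G) - (ρ '' ↑G)) := by
      intro s hs t ht hst η hη hmem
      have himg : ((ρ '' ↑G) - (ρ '' ↑G) : Set _) = ρ '' (↑G - ↑G) := by
        ext x
        constructor
        · rintro ⟨x₁, ⟨a, ha, rfl⟩, x₂, ⟨b, hb, rfl⟩, rfl⟩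
          exact ⟨a - b, Set.sub_mem_sub ha hb, by rw [map_sub]⟩
        · rintro ⟨y, ⟨a, ha, b, hb, rfl⟩, rfl⟩
          exact ⟨ρ a, ⟨a, ha, rfl⟩, ρ b, ⟨b, hb, rfl⟩, (map_sub ρ a b).symm⟩
      rw [himg, ← ρ.image_convexHull] at hmem
      have heq : (1+η) • (ρ s - ρ t) = ρ ((1+η) • (s - t)) := by
        rw [map_smul, map_sub]
      rw [heq] at hmem
      obtain ⟨c, hc, hcρ⟩ := hmem
      have hv₀V : (1+η) • (s - t) - c ∈ V := hkerρ _ (by rw [map_sub, hcρ, sub_self])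
      obtain ⟨τ₀, hτ₀, hτ⟩ := small_multiples hE₀conv hE₀sym h0E₀ (hVE₀ hv₀V)
      set lam := min τ₀ 1 with hlamdef
      have hlam0 : 0 < lam := lt_min hτ₀ one_pos
      have hlam1 : lam ≤ 1 := min_le_right _ _
      have hlamτ : lam ≤ τ₀ := min_le_left _ _
      set η' := lam * η with hη'def
      have hη'0 : 0 < η' := mul_pos hlam0 hη
      have hc' : lam • c + (1 - lam) • (s - t)
          ∈ convexHull ℝ (↑G - ↑G : Set (EuclideanSpace ℝ (Fin d))) := by
        refine (convex_convexHull ℝ _) hc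
          (subset_convexHull ℝ _ (Set.sub_mem_sub (Finset.mem_coe.2 hs) (Finset.mem_coe.2 ht)))
          hlam0.le (by linarith) (by ring)
      have hein : lam • ((1+η) • (s - t) - c) ∈ E₀ :=
        hτ lam (by rw [abs_of_pos hlam0]; exact hlamτ)
      have hkey : (1+η') • (s - t)
          = (lam • c + (1 - lam) • (s - t)) + lam • ((1+η) • (s - t) - c) := by
        rw [hη'def]
        module
      have hD1 : (1+η') • (s - t) ∈ D := by
        rw [hkey]
        exact hGhull _ hc' _ hein
      have h1η' : (0:ℝ) < 1 + η' := by linarith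
      have hstD : s - t ∈ interior D := by
        have hab1 : η'/(1+η') + (1+η')⁻¹ = 1 := by field_simp; ring
        have hcomb := hDconv.combo_interior_closure_mem_interior h0D (subset_closure hD1)
          (by positivity : (0:ℝ) < η'/(1+η')) (by positivity : (0:ℝ) ≤ (1+η')⁻¹) hab1
        simpa [smul_smul, inv_mul_cancel₀ h1η'.ne'] using hcomb
      have hstΛ : s - t ∈ Λ :=
        Λ.sub_mem (hG (Finset.mem_coe.2 hs)).1 (hG (Finset.mem_coe.2 ht)).1
      exact packing_lemma hPconvex hP0 hpack hstΛ (sub_ne_zero.2 hst) hstD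
    have hinj : Set.InjOn ρ ↑G := by
      intro a ha b hb h
      by_contra hne
      have h0 : ((1:ℝ)+1) • (ρ a - ρ b) ∈ convexHull ℝ ((ρ '' ↑G) - (ρ '' ↑G)) := by
        rw [h, sub_self, smul_zero]
        exact subset_convexHull ℝ _ ⟨ρ b, ⟨b, hb, rfl⟩, ρ b, ⟨b, hb, rfl⟩, sub_self _⟩
      exact claim a (Finset.mem_coe.1 ha) b (Finset.mem_coe.1 hb) hne 1 one_pos h0
    have hsep' : ∀ s' ∈ ρ '' ↑G, ∀ t' ∈ ρ '' ↑G, s' ≠ t' → ∀ η : ℝ, 0 < η →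
        (1+η) • (s' - t') ∉ convexHull ℝ ((ρ '' ↑G) - (ρ '' ↑G)) := by
      rintro s' ⟨a, ha, rfl⟩ t' ⟨b, hb, rfl⟩ hne η hη
      exact claim a (Finset.mem_coe.1 ha) b (Finset.mem_coe.1 hb)
        (fun h => hne (by rw [h])) η hη
    have hdg := dg_bound _ (ρ '' ↑G) (G.finite_toSet.image ρ) hsep'
    have hcard : (ρ '' ↑G).ncard = G.card := by
      rw [Set.ncard_image_of_injOn hinj, Set.ncard_coe_finset]
    rw [hcard] at hdg
    calc G.card ≤ 2 ^ (Module.finrank ℝ W) := hdg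
      _ = 2 ^ k := by rw [hWrank]
  have hTfin : T.Finite := by
    by_contra hinf
    have hinf' : T.Infinite := hinf
    obtain ⟨G', hG'T, hG'fin, hG'card⟩ := Set.Infinite.exists_subset_ncard_eq hinf' (2^k+1)
    have hb := key hG'fin.toFinset (by rwa [Set.Finite.coe_toFinset])
    rw [← Set.ncard_eq_toFinset_card G' hG'fin] at hb
    omega
  refine ⟨hTfin, ?_⟩
  rw [Set.ncard_eq_toFinset_card T hTfin]
  exact key hTfin.toFinset (by simp)
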